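/- Let R be a commutative ring, A an associative unital R-algebra, and (θ; x₁, …, xₙ; y₁, …, yₙ) a Frobenius system for A over R such that (x₁, …, xₙ) is an R-basis of A. Let μ be an R-algebra automorphism of A satisfying θ(c·a) = θ(μ(a)·c) for all a, c ∈ A, set ω := ∑ᵢ μ(xᵢ)·yᵢ, and define tr : A → R by tr(a) = ∑ᵢ θ(yᵢ·a·xᵢ). Then there is a unit u ∈ R^× such that det([tr(xᵢ·xⱼ)]ᵢ,ⱼ) = u · det(ω_L), where ω_L denotes the R-linear endomorphism of A given by left multiplication by ω and det(ω_L) is its determinant (the norm of ω). In other words, the discriminant of A over R with respect to tr equals the norm of the different, up to a unit of R. -/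

import Mathlib

/-- **Discriminant of a free Frobenius algebra = norm of the different, up to a unit.**
If `(θ; x; y)` is a Frobenius system for the `R`-algebra `A` with `x` an `R`-basis, `μ`
is a Nakayama automorphism, `ω := ∑ i, μ (xᵢ) * yᵢ`, and `tr a := ∑ i, θ (yᵢ * a * xᵢ)`,
then `det [tr (xᵢ * xⱼ)] = u * det (ω_L)` for some unit `u` of `R`, where `ω_L` is the
`R`-linear endomorphism of `A` given by left multiplication by `ω`. -/
theorem stmt4 {R A : Type*} [CommRing R] [Ring A] [Algebra R A]
    {n : ℕ} (θ : A →ₗ[R] R) (x y : Fin n → A)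
    (h1 : ∀ a : A, ∑ i, θ (y i * a) • x i = a)
    (h2 : ∀ a : A, ∑ i, θ (a * x i) • y i = a)
    (b : Module.Basis (Fin n) R A) (hb : ∀ i, b i = x i)
    (μ : A ≃ₐ[R] A) (hμ : ∀ a c : A, θ (c * a) = θ (μ a * c)) :
    ∃ u : Rˣ,
      (Matrix.of fun i j : Fin n => ∑ k, θ (y k * (x i * x j) * x k)).det =
        (u : R) * LinearMap.det (LinearMap.mulLeft R (∑ i, μ (x i) * y i)) := by
  classical
  set ω : A := ∑ i, μ (x i) * y i with hω
  -- coordinates in the basis b are given by θ (y j * ·)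
  have hrepr : ∀ (a : A) (j : Fin n), b.repr a j = θ (y j * a) := by
    intro a j
    have ha : a = ∑ i, θ (y i * a) • b i := by
      simp_rw [hb]; exact (h1 a).symm
    conv_lhs => rw [ha]
    rw [map_sum, Finsupp.finset_sum_apply]
    simp [Module.Basis.repr_self, Finsupp.single_apply]
  set matL : Matrix (Fin n) (Fin n) R :=
    LinearMap.toMatrix b b (LinearMap.mulLeft R ω) with hmatL
  have hmatL' : ∀ k i, matL k i = θ (y k * (ω * x i)) := by
    intro k i
    rw [hmatL, LinearMap.toMatrix_apply, hb, LinearMap.mulLeft_apply, hrepr]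
  set Q : Matrix (Fin n) (Fin n) R := Matrix.of fun j k => θ (x k * x j) with hQ
  -- the matrix identity M = (Q * matL).transpose
  have hM : (Matrix.of fun i j : Fin n => ∑ k, θ (y k * (x i * x j) * x k)) =
      (Q * matL).transpose := by
    ext i j
    have e1 : ∀ k : Fin n, θ (y k * (x i * x j) * x k)
        = θ (μ (x i) * μ (x j) * (μ (x k) * y k)) := by
      intro k
      rw [mul_assoc, hμ (x i * x j * x k) (y k)]
      simp [mul_assoc]
    calc (∑ k, θ (y k * (x i * x j) * x k))
        = ∑ k, θ (μ (x i) * μ (x j) * (μ (x k) * y k)) := by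
          exact Finset.sum_congr rfl fun k _ => e1 k
      _ = θ (μ (x i) * μ (x j) * ω) := by
          rw [← map_sum, ← Finset.mul_sum, hω]
      _ = θ (μ (x j) * ω * x i) := by
          rw [mul_assoc]
          exact (hμ (x i) (μ (x j) * ω)).symm
      _ = θ (μ (x j) * (ω * x i)) := by rw [mul_assoc]
      _ = ∑ k, matL k i * θ (x k * x j) := by
          have : ω * x i = ∑ k, matL k i • x k := by
            have h0 := (b.sum_repr (ω * x i)).symm
            simp_rw [hrepr, hb] at h0
            rw [h0]
            exact Finset.sum_congr rfl fun k _ => by rw [hmatL']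
          rw [this, Finset.mul_sum, map_sum]
          refine Finset.sum_congr rfl fun k _ => ?_
          rw [mul_smul_comm, map_smul, smul_eq_mul, hμ (x j) (x k)]
      _ = ∑ k, Q j k * matL k i := by
          refine Finset.sum_congr rfl fun k _ => ?_
          rw [hQ, Matrix.of_apply, mul_comm]
      _ = (Q * matL).transpose i j := by
          rw [Matrix.transpose_apply, Matrix.mul_apply]
  -- Q has a left inverse, hence unit determinant
  set D : Matrix (Fin n) (Fin n) R := Matrix.of fun m i => θ (y m * y i) with hD
  have hDQ : D * Q = 1 := by
    ext m k
    have hx : x k = ∑ i, θ (x k * x i) • y i := (h2 (x k)).symm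
    have : b.repr (x k) m = ∑ i, θ (x k * x i) * θ (y m * y i) := by
      conv_lhs => rw [hx]
      rw [map_sum, Finsupp.finset_sum_apply]
      refine Finset.sum_congr rfl fun i _ => ?_
      rw [map_smul, Finsupp.smul_apply, smul_eq_mul, hrepr]
    have hδ : b.repr (x k) m = if k = m then 1 else 0 := by
      rw [← hb, b.repr_self, Finsupp.single_apply]
    rw [Matrix.mul_apply, Matrix.one_apply]
    calc (∑ j, D m j * Q j k) = ∑ i, θ (x k * x i) * θ (y m * y i) := by
          refine Finset.sum_congr rfl fun i _ => ?_
          rw [hD, hQ, Matrix.of_apply, Matrix.of_apply, mul_comm]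
      _ = if k = m then 1 else 0 := by rw [← this, hδ]
      _ = if m = k then 1 else 0 := by simp [eq_comm]
  have hu : IsUnit Q.det := Matrix.isUnit_det_of_left_inverse hDQ
  refine ⟨hu.unit, ?_⟩
  rw [hM, Matrix.det_transpose, Matrix.det_mul, IsUnit.unit_spec,
    hmatL, LinearMap.det_toMatrix]
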